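/- Let n, s̃, r, k, ℓ be natural numbers with k ≥ 2, kℓ ≤ kr ≤ s̃ ≤ n and ℓ ≥ 1. Let 𝕋 be the set of pairs (T, m_T) where T is an s̃-element subset of an n-element vertex set and m_T is a set of r pairwise disjoint k-element subsets of T; so |𝕋| = C(n, s̃) · s̃! / ((s̃ - kr)! (k!)^r r!). Fix one pair (T, m_T) ∈ 𝕋 and let 𝕋_ℓ be the set of pairs (U, m_U) ∈ 𝕋 such that m_U shares exactly ℓ edges with m_T. Then |𝕋_ℓ| ≤ C(r, ℓ) · C(n - kℓ, s̃ - kℓ) · (s̃ - kℓ)! / ((s̃ - kr)! (k!)^{r-ℓ} (r - ℓ)!). -/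

import Mathlib

open Finset

/-- matchings of `r` pairwise disjoint `k`-subsets of `W`. -/
def MM {n : ℕ} (W : Finset (Fin n)) (r k : ℕ) : Finset (Finset (Finset (Fin n))) :=
  Finset.univ.filter (fun m => m.card = r ∧ (∀ e ∈ m, e.card = k ∧ e ⊆ W) ∧
    (∀ e ∈ m, ∀ f ∈ m, e ≠ f → Disjoint e f))

lemma MM_bound {n : ℕ} (k : ℕ) : ∀ (r : ℕ) (W : Finset (Fin n)),
    (MM W r k).card * (k.factorial ^ r * r.factorial * (W.card - k * r).factorial)
      ≤ W.card.factorial := by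
  intro r
  induction r with
  | zero =>
      intro W
      have h1 : MM W 0 k ⊆ {∅} := by
        intro m hm
        simp only [MM, mem_filter, mem_univ, true_and] at hm
        simp [card_eq_zero.mp hm.1]
      have h2 : (MM W 0 k).card ≤ 1 := by
        simpa using card_le_card h1
      simpa using Nat.mul_le_mul_right (W.card.factorial) h2
  | succ r ih =>
      intro W
      have hdc : (MM W (r+1) k).card * (r+1) ≤
          ∑ e ∈ W.powersetCard k, (MM (W \ e) r k).card := by
        have hinj : ((MM W (r+1) k).sigma (fun m => m)).card ≤
            ((W.powersetCard k).sigma (fun e => MM (W \ e) r k)).card := by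
          apply card_le_card_of_injOn (fun x => ⟨x.2, x.1.erase x.2⟩)
          · rintro ⟨m, e⟩ hme
            simp only [mem_coe, mem_sigma] at hme ⊢
            obtain ⟨hm, he⟩ := hme
            simp only [MM, mem_filter, mem_univ, true_and] at hm
            obtain ⟨hcard, hedges, hdisj⟩ := hm
            refine ⟨?_, ?_⟩
            · rw [mem_powersetCard]; exact ⟨(hedges e he).2, (hedges e he).1⟩
            · simp only [MM, mem_filter, mem_univ, true_and]
              refine ⟨?_, ?_, ?_⟩
              · rw [card_erase_of_mem he, hcard]; rfl
              · intro f hf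
                have hfm := mem_of_mem_erase hf
                have hne : f ≠ e := ne_of_mem_erase hf
                refine ⟨(hedges f hfm).1, ?_⟩
                intro x hx
                rw [mem_sdiff]
                refine ⟨(hedges f hfm).2 hx, ?_⟩
                exact (Finset.disjoint_left.mp (hdisj f hfm e he hne)) hx
              · intro f hf g hg hfg
                exact hdisj f (mem_of_mem_erase hf) g (mem_of_mem_erase hg) hfg
          · rintro ⟨m1, e1⟩ h1 ⟨m2, e2⟩ h2 heq
            simp only [mem_coe, mem_sigma] at h1 h2
            obtain ⟨he, hm⟩ := Sigma.mk.inj_iff.mp heq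
            subst he
            have hm' : m1.erase e1 = m2.erase e1 := eq_of_heq hm
            have hmm : m1 = m2 := by
              rw [← insert_erase h1.2, ← insert_erase h2.2, hm']
            subst hmm
            rfl
        rw [card_sigma, card_sigma] at hinj
        calc (MM W (r+1) k).card * (r+1)
            = ∑ m ∈ MM W (r+1) k, (r+1) := by rw [sum_const, smul_eq_mul]
          _ = ∑ m ∈ MM W (r+1) k, m.card := by
              refine Finset.sum_congr rfl (fun m hm => ?_)
              simp only [MM, mem_filter, mem_univ, true_and] at hm
              exact hm.1.symm
          _ ≤ _ := hinj
      have hsum : ∀ e ∈ W.powersetCard k,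
          (MM (W \ e) r k).card *
            (k.factorial ^ r * r.factorial * (W.card - k - k * r).factorial)
            ≤ (W.card - k).factorial := by
        intro e he
        rw [mem_powersetCard] at he
        have hc : (W \ e).card = W.card - k := by rw [card_sdiff_of_subset he.1, he.2]
        have := ih (W \ e)
        rwa [hc] at this
      have hstep : (MM W (r+1) k).card *
          (k.factorial ^ (r+1) * (r+1).factorial * (W.card - k * (r+1)).factorial)
          ≤ W.card.choose k * (W.card - k).factorial * k.factorial := by
        have hre : W.card - k * (r+1) = W.card - k - k * r := by
          rw [Nat.sub_sub]; ring_nf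
        calc (MM W (r+1) k).card *
            (k.factorial ^ (r+1) * (r+1).factorial * (W.card - k * (r+1)).factorial)
            = ((MM W (r+1) k).card * (r+1)) *
              (k.factorial ^ r * r.factorial * (W.card - k - k * r).factorial) *
              k.factorial := by
              rw [hre, Nat.factorial_succ, pow_succ]; ring
          _ ≤ (∑ e ∈ W.powersetCard k, (MM (W \ e) r k).card) *
              (k.factorial ^ r * r.factorial * (W.card - k - k * r).factorial) *
              k.factorial := by
              exact Nat.mul_le_mul_right _ (Nat.mul_le_mul_right _ hdc)
          _ = (∑ e ∈ W.powersetCard k, (MM (W \ e) r k).card *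
              (k.factorial ^ r * r.factorial * (W.card - k - k * r).factorial)) *
              k.factorial := by rw [sum_mul]
          _ ≤ (∑ e ∈ W.powersetCard k, (W.card - k).factorial) * k.factorial := by
              exact Nat.mul_le_mul_right _ (Finset.sum_le_sum hsum)
          _ = W.card.choose k * (W.card - k).factorial * k.factorial := by
              rw [sum_const, smul_eq_mul, card_powersetCard]
      refine hstep.trans ?_
      rcases le_or_gt k W.card with h | h
      · rw [show W.card.choose k * (W.card - k).factorial * k.factorial
            = W.card.choose k * k.factorial * (W.card - k).factorial by ring,
          Nat.choose_mul_factorial_mul_factorial h]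
      · rw [Nat.choose_eq_zero_of_lt h]
        simp

/-- The family `𝕋` of pairs `(T, m_T)` with `T` an `s̃`-subset of `[n]` and `m_T` a matching
of `r` pairwise disjoint `k`-subsets of `T`. -/
def TT (n s r k : ℕ) : Finset (Finset (Fin n) × Finset (Finset (Fin n))) :=
  Finset.univ.filter (fun p =>
    p.1.card = s ∧ p.2.card = r ∧ (∀ e ∈ p.2, e.card = k ∧ e ⊆ p.1) ∧
    (∀ e ∈ p.2, ∀ f ∈ p.2, e ≠ f → Disjoint e f))

/-- For a fixed `(T, m_T) ∈ 𝕋`, the number of pairs `(U, m_U) ∈ 𝕋` with `m_U` sharing exactly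
`ℓ` edges with `m_T` is at most `C(r,ℓ)·C(n-kℓ, s̃-kℓ)·(s̃-kℓ)!/((s̃-kr)!(k!)^{r-ℓ}(r-ℓ)!)`
(stated multiplied out to avoid division). -/
theorem stmt_10 (n s r k ℓ : ℕ) (hk : 2 ≤ k) (hℓ : 1 ≤ ℓ) (hℓr : ℓ ≤ r)
    (hrs : k * r ≤ s) (hsn : s ≤ n)
    (T : Finset (Fin n)) (mT : Finset (Finset (Fin n))) (hT : (T, mT) ∈ TT n s r k) :
    ((TT n s r k).filter (fun p => (p.2 ∩ mT).card = ℓ)).card *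
        ((s - k * r).factorial * (k.factorial) ^ (r - ℓ) * (r - ℓ).factorial) ≤
      r.choose ℓ * (n - k * ℓ).choose (s - k * ℓ) * (s - k * ℓ).factorial := by
  simp only [TT, mem_filter, mem_univ, true_and] at hT
  obtain ⟨hTs, hmTr, hmTe, hmTd⟩ := hT
  set D := (s - k * r).factorial * (k.factorial) ^ (r - ℓ) * (r - ℓ).factorial with hD
  set F := (TT n s r k).filter (fun p => (p.2 ∩ mT).card = ℓ) with hF
  have hkℓr : k * ℓ ≤ k * r := Nat.mul_le_mul_left k hℓr
  have hrest : k * (r - ℓ) = k * r - k * ℓ := by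
    rw [Nat.mul_sub]
  have hfib : F.card = ∑ S ∈ mT.powersetCard ℓ, (F.filter (fun p => p.2 ∩ mT = S)).card := by
    apply card_eq_sum_card_fiberwise
    intro p hp
    rw [mem_coe, mem_powersetCard]
    exact ⟨inter_subset_right, (mem_filter.mp hp).2⟩
  have key : ∀ S ∈ mT.powersetCard ℓ,
      (F.filter (fun p => p.2 ∩ mT = S)).card * D
        ≤ (n - k * ℓ).choose (s - k * ℓ) * (s - k * ℓ).factorial := by
    intro S hS
    rw [mem_powersetCard] at hS
    obtain ⟨hSsub, hScard⟩ := hS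
    set A := S.biUnion id with hA
    have hAcard : A.card = k * ℓ := by
      have h1 := card_biUnion (s := S) (t := id)
        (fun x hx y hy hxy => hmTd x (hSsub hx) y (hSsub hy) hxy)
      have h2 : ∑ u ∈ S, #(id u) = ∑ _u ∈ S, k :=
        Finset.sum_congr rfl (fun e he => (hmTe e (hSsub he)).1)
      rw [hA, h1, h2, sum_const, smul_eq_mul, hScard, mul_comm]
    have hAc : Aᶜ.card = n - k * ℓ := by
      rw [card_compl, hAcard, Fintype.card_fin]
    have hinj : (F.filter (fun p => p.2 ∩ mT = S)).card ≤
        ((Aᶜ.powersetCard (s - k * ℓ)).sigma (fun U => MM U (r - ℓ) k)).card := by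
      apply card_le_card_of_injOn (fun p => ⟨p.1 \ A, p.2 \ S⟩)
      · intro p hp
        simp only [mem_coe, mem_filter, TT, mem_univ, true_and, hF] at hp
        obtain ⟨⟨⟨hps, hpr, hpe, hpd⟩, hpl⟩, hpS⟩ := hp
        have hSp : S ⊆ p.2 := by rw [← hpS]; exact inter_subset_left
        have hAp : A ⊆ p.1 := by
          rw [hA]
          exact biUnion_subset.mpr (fun e he => (hpe e (hSp he)).2)
        simp only [mem_coe, mem_sigma]
        constructor
        · rw [mem_powersetCard]
          constructor
          · intro x hx
            rw [mem_compl]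
            exact (mem_sdiff.mp hx).2
          · rw [card_sdiff_of_subset hAp, hps, hAcard]
        · simp only [MM, mem_filter, mem_univ, true_and]
          refine ⟨?_, ?_, ?_⟩
          · rw [card_sdiff_of_subset hSp, hpr, hScard]
          · intro e he
            obtain ⟨hem, heS⟩ := mem_sdiff.mp he
            refine ⟨(hpe e hem).1, ?_⟩
            intro x hx
            rw [mem_sdiff]
            refine ⟨(hpe e hem).2 hx, ?_⟩
            intro hxA
            obtain ⟨f, hfS, hxf⟩ := mem_biUnion.mp hxA
            have hef : e ≠ f := by rintro rfl; exact heS hfS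
            exact (Finset.disjoint_left.mp (hpd e hem f (hSp hfS) hef)) hx hxf
          · intro e he f hf hef
            exact hpd e (mem_sdiff.mp he).1 f (mem_sdiff.mp hf).1 hef
      · intro p hp q hq heq
        simp only [mem_coe, mem_filter, TT, mem_univ, true_and, hF] at hp hq
        obtain ⟨⟨⟨hps, hpr, hpe, hpd⟩, hpl⟩, hpS⟩ := hp
        obtain ⟨⟨⟨hqs, hqr, hqe, hqd⟩, hql⟩, hqS⟩ := hq
        have hSp : S ⊆ p.2 := by rw [← hpS]; exact inter_subset_left
        have hSq : S ⊆ q.2 := by rw [← hqS]; exact inter_subset_left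
        have hAp : A ⊆ p.1 := by
          rw [hA]; exact biUnion_subset.mpr (fun e he => (hpe e (hSp he)).2)
        have hAq : A ⊆ q.1 := by
          rw [hA]; exact biUnion_subset.mpr (fun e he => (hqe e (hSq he)).2)
        obtain ⟨h1, h2⟩ := Sigma.mk.inj_iff.mp heq
        have h2' : p.2 \ S = q.2 \ S := eq_of_heq h2
        have e1 : p.1 = q.1 := by
          rw [← sdiff_union_of_subset hAp, ← sdiff_union_of_subset hAq, h1]
        have e2 : p.2 = q.2 := by
          rw [← sdiff_union_of_subset hSp, ← sdiff_union_of_subset hSq, h2']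
        exact Prod.ext e1 e2
    have hsub : s - k * ℓ - k * (r - ℓ) = s - k * r := by omega
    have hbound : ∀ U ∈ Aᶜ.powersetCard (s - k * ℓ),
        (MM U (r - ℓ) k).card * D ≤ (s - k * ℓ).factorial := by
      intro U hU
      rw [mem_powersetCard] at hU
      have := MM_bound k (r - ℓ) U
      rw [hU.2, hsub] at this
      calc (MM U (r - ℓ) k).card * D
          = (MM U (r - ℓ) k).card *
            (k.factorial ^ (r - ℓ) * (r - ℓ).factorial * (s - k * r).factorial) := by
            rw [hD]; ring
        _ ≤ _ := this
    calc (F.filter (fun p => p.2 ∩ mT = S)).card * D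
        ≤ ((Aᶜ.powersetCard (s - k * ℓ)).sigma (fun U => MM U (r - ℓ) k)).card * D :=
          Nat.mul_le_mul_right _ hinj
      _ = ∑ U ∈ Aᶜ.powersetCard (s - k * ℓ), (MM U (r - ℓ) k).card * D := by
          rw [card_sigma, sum_mul]
      _ ≤ ∑ U ∈ Aᶜ.powersetCard (s - k * ℓ), (s - k * ℓ).factorial :=
          Finset.sum_le_sum hbound
      _ = (n - k * ℓ).choose (s - k * ℓ) * (s - k * ℓ).factorial := by
          rw [sum_const, smul_eq_mul, card_powersetCard, hAc]
  calc F.card * D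
      = ∑ S ∈ mT.powersetCard ℓ, (F.filter (fun p => p.2 ∩ mT = S)).card * D := by
        rw [hfib, sum_mul]
    _ ≤ ∑ S ∈ mT.powersetCard ℓ, (n - k * ℓ).choose (s - k * ℓ) * (s - k * ℓ).factorial :=
        Finset.sum_le_sum key
    _ = r.choose ℓ * (n - k * ℓ).choose (s - k * ℓ) * (s - k * ℓ).factorial := by
        rw [sum_const, smul_eq_mul, card_powersetCard, hmTr, mul_assoc]
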